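/- The map c ↦ 𝒫_c sending a coloring vector to its tagged partition is a bijection between the set of coloring vectors in ℤⁿ and the set of tagged partitions of {1,…,n}. -/

import Mathlib

/-- The maximum of `c₁,…,c_{i-1}` (0-indexed: `c 0, …, c (i-1)`), for `i > 0`. -/
def maxBelow {n : ℕ} (c : Fin n → ℤ) (i : Fin n) (hi : 0 < i.val) : ℤ :=
  (Finset.Iio i).sup' ⟨⟨0, lt_of_le_of_lt (Nat.zero_le _) i.isLt⟩, Finset.mem_Iio.mpr hi⟩ c

/-- `c` is a coloring vector: the first component is 0 or 1, and each later component
satisfies `-mᵢ ≤ cᵢ ≤ 1 + mᵢ` where `mᵢ` is the max of the preceding components. -/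
def IsColoringVec {n : ℕ} (c : Fin n → ℤ) : Prop :=
  (∀ h0 : 0 < n, c ⟨0, h0⟩ = 0 ∨ c ⟨0, h0⟩ = 1) ∧
  ∀ (i : Fin n) (hi : 0 < i.val), -maxBelow c i hi ≤ c i ∧ c i ≤ 1 + maxBelow c i hi

/-- A tagged partition of `{1,…,n}`: a partition into nonempty classes together with a
partial involution on the classes (encoded via `Option`) having at most one fixed point. -/
structure TaggedPartition (n : ℕ) where
  classes : Set (Set (Fin n))
  nonempty : ∀ A ∈ classes, A.Nonempty
  cover : ∀ i : Fin n, ∃ A ∈ classes, i ∈ A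
  disjoint : ∀ A ∈ classes, ∀ B ∈ classes, (A ∩ B).Nonempty → A = B
  star : Set (Fin n) → Option (Set (Fin n))
  star_dom : ∀ A, A ∉ classes → star A = none
  star_mem : ∀ A B, star A = some B → A ∈ classes ∧ B ∈ classes
  star_invol : ∀ A B, star A = some B → star B = some A
  fix_unique : ∀ A B, star A = some A → star B = some B → A = B

section
variable {n : ℕ} {c : Fin n → ℤ}

lemma le_maxBelow {i j : Fin n} (hi : 0 < i.val) (hj : j < i) : c j ≤ maxBelow c i hi :=
  Finset.le_sup' c (Finset.mem_Iio.mpr hj)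

lemma exists_maxBelow (i : Fin n) (hi : 0 < i.val) :
    ∃ j : Fin n, j < i ∧ c j = maxBelow c i hi := by
  obtain ⟨j, hj, h⟩ := Finset.exists_mem_eq_sup' (α := ℤ)
      ⟨⟨0, lt_of_le_of_lt (Nat.zero_le _) i.isLt⟩, Finset.mem_Iio.mpr hi⟩ c
  exact ⟨j, Finset.mem_Iio.mp hj, h.symm⟩

lemma maxBelow_eq_of {i : Fin n} (hi : 0 < i.val) {a : ℤ}
    (h1 : ∀ j : Fin n, j < i → c j ≤ a) (h2 : ∃ j : Fin n, j < i ∧ c j = a) :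
    maxBelow c i hi = a := by
  apply le_antisymm
  · exact Finset.sup'_le _ _ fun j hj => h1 j (Finset.mem_Iio.mp hj)
  · obtain ⟨j, hj, h⟩ := h2
    exact h ▸ Finset.le_sup' c (Finset.mem_Iio.mpr hj)

lemma maxBelow_nonneg (hc : IsColoringVec c) (i : Fin n) (hi : 0 < i.val) :
    0 ≤ maxBelow c i hi := by
  have h0 : (⟨0, lt_of_le_of_lt (Nat.zero_le _) i.isLt⟩ : Fin n) < i := by
    simpa [Fin.lt_def] using hi
  have := le_maxBelow (c := c) hi h0
  rcases hc.1 (lt_of_le_of_lt (Nat.zero_le _) i.isLt) with h | h <;> omega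

lemma initseg (hc : IsColoringVec c) :
    ∀ N : ℕ, ∀ i : Fin n, i.val ≤ N → ∀ hi : 0 < i.val, ∀ t : ℤ, 0 < t →
      t ≤ maxBelow c i hi → ∃ j : Fin n, j < i ∧ c j = t := by
  intro N
  induction N with
  | zero => intro i hiN hi; omega
  | succ N IH =>
    intro i hiN hi t ht hle
    obtain ⟨j, hj, hcj⟩ := exists_maxBelow (c := c) i hi
    rcases Nat.eq_zero_or_pos j.val with hj0 | hj0
    · rcases hc.1 (lt_of_le_of_lt (Nat.zero_le _) i.isLt) with h | h
      · exfalso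
        have : j = ⟨0, lt_of_le_of_lt (Nat.zero_le _) i.isLt⟩ := by
          apply Fin.ext; simpa using hj0
        rw [this, h] at hcj; omega
      · refine ⟨j, hj, ?_⟩
        have : j = ⟨0, lt_of_le_of_lt (Nat.zero_le _) i.isLt⟩ := by
          apply Fin.ext; simpa using hj0
        rw [this, h]; rw [this, h] at hcj; omega
    · by_cases h2 : t ≤ maxBelow c j hj0
      · have hjN : j.val ≤ N := by have := Fin.lt_def.mp hj; omega
        obtain ⟨k, hk, hck⟩ := IH j hjN hj0 t ht h2
        exact ⟨k, lt_trans hk hj, hck⟩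
      · push_neg at h2
        have hub := (hc.2 j hj0).2
        refine ⟨j, hj, ?_⟩
        omega

lemma initseg' (hc : IsColoringVec c) (i : Fin n) (hi : 0 < i.val)
    {t : ℤ} (ht : 0 < t) (hle : t ≤ maxBelow c i hi) :
    ∃ j : Fin n, j < i ∧ c j = t :=
  initseg hc i.val i le_rfl hi t ht hle

/-- every earlier value is at least `-maxBelow`. -/
lemma neg_maxBelow_le (hc : IsColoringVec c) (i : Fin n) (hi : 0 < i.val)
    {j : Fin n} (hj : j < i) : -maxBelow c i hi ≤ c j := by
  have hm := maxBelow_nonneg hc i hi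
  rcases Nat.eq_zero_or_pos j.val with hj0 | hj0
  · have : j = ⟨0, lt_of_le_of_lt (Nat.zero_le _) i.isLt⟩ := by
      apply Fin.ext; simpa using hj0
    rcases hc.1 (lt_of_le_of_lt (Nat.zero_le _) i.isLt) with h | h <;>
      rw [this, h] <;> omega
  · have h1 := (hc.2 j hj0).1
    have h2 : maxBelow c j hj0 ≤ maxBelow c i hi := by
      obtain ⟨k, hk, hck⟩ := exists_maxBelow (c := c) j hj0
      calc maxBelow c j hj0 = c k := hck.symm
        _ ≤ maxBelow c i hi := le_maxBelow hi (lt_trans hk hj)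
    omega

end

section Inj
variable {n : ℕ} (F : {c : Fin n → ℤ // IsColoringVec c} → TaggedPartition n)
    (hclasses : ∀ c, (F c).classes = {A | ∃ i : Fin n, A = {j : Fin n | c.1 j = c.1 i}})
    (hstar : ∀ c A B, (F c).star A = some B ↔
      ∃ i : Fin n, A = {j : Fin n | c.1 j = c.1 i} ∧
        B = {j : Fin n | c.1 j = -c.1 i} ∧ B.Nonempty)

include hclasses in
lemma L1dir (c c' : {c : Fin n → ℤ // IsColoringVec c})
    (hF : (F c).classes = (F c').classes) {i j : Fin n} (h : c.1 j = c.1 i) :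
    c'.1 j = c'.1 i := by
  have hmem : {k : Fin n | c.1 k = c.1 i} ∈ (F c').classes := by
    rw [← hF, hclasses]; exact ⟨i, rfl⟩
  rw [hclasses] at hmem
  obtain ⟨l, hl⟩ := hmem
  have hi : i ∈ {k : Fin n | c.1 k = c.1 i} := rfl
  have hj : j ∈ {k : Fin n | c.1 k = c.1 i} := h
  rw [hl] at hi hj
  exact hj.trans hi.symm

include hstar in
lemma L2dir (c c' : {c : Fin n → ℤ // IsColoringVec c})
    (hF : (F c).star = (F c').star) {i j : Fin n} (h : c.1 j = -c.1 i) :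
    c'.1 j = -c'.1 i := by
  have h1 : (F c).star {k : Fin n | c.1 k = c.1 i} = some {k : Fin n | c.1 k = -c.1 i} :=
    (hstar c _ _).mpr ⟨i, rfl, rfl, ⟨j, h⟩⟩
  rw [hF, hstar] at h1
  obtain ⟨l, hA, hB, -⟩ := h1
  have hi : i ∈ {k : Fin n | c.1 k = c.1 i} := rfl
  have hj : j ∈ {k : Fin n | c.1 k = -c.1 i} := h
  rw [hA] at hi
  rw [hB] at hj
  have hi' : c'.1 i = c'.1 l := hi
  have hj' : c'.1 j = -c'.1 l := hj
  rw [hj', ← hi']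

include hclasses hstar in
lemma F_inj : Function.Injective F := by
  intro c c' hF
  have hFc : (F c).classes = (F c').classes := by rw [hF]
  have hFs : (F c).star = (F c').star := by rw [hF]
  apply Subtype.ext
  funext i
  -- strong induction on i.val
  suffices H : ∀ N : ℕ, ∀ i : Fin n, i.val < N → c.1 i = c'.1 i by
    exact H (i.val + 1) i (Nat.lt_succ_self _)
  intro N
  induction N with
  | zero => intro i h; omega
  | succ N IH =>
    intro i hiN
    by_cases hprev : ∃ j : Fin n, j < i ∧ c.1 j = c.1 i
    · obtain ⟨j, hj, hcj⟩ := hprev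
      have h1 : c'.1 j = c'.1 i := L1dir F hclasses c c' hFc hcj
      have h2 : c.1 j = c'.1 j := IH j (by have := Fin.lt_def.mp hj; omega)
      rw [← h1, ← h2, hcj]
    · push_neg at hprev
      have hprev' : ∀ j : Fin n, j < i → c'.1 j ≠ c'.1 i := by
        intro j hj hcj
        exact hprev j hj (L1dir F hclasses c' c hFc.symm hcj)
      rcases Nat.eq_zero_or_pos i.val with hi0 | hi0
      · -- first entry
        have hn : 0 < n := lt_of_le_of_lt (Nat.zero_le _) i.isLt
        have hie : i = ⟨0, hn⟩ := by apply Fin.ext; simpa using hi0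
        have hc0 := c.2.1 hn
        have hc0' := c'.2.1 hn
        rw [← hie] at hc0 hc0'
        rcases hc0 with h | h <;> rcases hc0' with h' | h'
        · rw [h, h']
        · exfalso
          have : c.1 i = -c.1 i := by rw [h]; ring
          have := L2dir F hstar c c' hFs this
          omega
        · exfalso
          have : c'.1 i = -c'.1 i := by rw [h']; ring
          have := L2dir F hstar c' c hFs.symm this
          omega
        · rw [h, h']
      · -- i > 0, new value
        have IH' : ∀ j : Fin n, j < i → c.1 j = c'.1 j := fun j hj =>
          IH j (by have := Fin.lt_def.mp hj; omega)
        have hmeq : maxBelow c'.1 i hi0 = maxBelow c.1 i hi0 := by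
          apply maxBelow_eq_of hi0
          · intro j hj; rw [← IH' j hj]; exact le_maxBelow hi0 hj
          · obtain ⟨j, hj, hcj⟩ := exists_maxBelow (c := c.1) i hi0
            exact ⟨j, hj, by rw [← IH' j hj, hcj]⟩
        set m := maxBelow c.1 i hi0 with hm
        have hbd := c.2.2 i hi0
        have hbd' := c'.2.2 i hi0
        rw [hmeq] at hbd'
        rcases lt_trichotomy (c.1 i) 0 with hlt | heq | hgt
        · -- negative: partner exists below
          obtain ⟨j, hj, hcj⟩ := initseg' c.2 i hi0 (t := -c.1 i) (by omega) (by omega)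
          have hcj' : c.1 j = -c.1 i := by omega
          have := L2dir F hstar c c' hFs hcj'
          rw [IH' j hj] at hcj'
          omega
        · have : c.1 i = -c.1 i := by omega
          have := L2dir F hstar c c' hFs this
          omega
        · -- positive: c.1 i = 1 + m
          have hci : c.1 i = 1 + m := by
            rcases lt_or_ge m (c.1 i) with h | h
            · omega
            · exfalso
              obtain ⟨j, hj, hcj⟩ := initseg' c.2 i hi0 hgt h
              exact hprev j hj hcj
          -- now c'.1 i can't be ≤ 0
          rcases lt_trichotomy (c'.1 i) 0 with hlt' | heq' | hgt'
          · exfalso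
            obtain ⟨j, hj, hcj⟩ := initseg' c'.2 i hi0 (t := -c'.1 i) (by omega)
              (by rw [hmeq]; omega)
            have hcj' : c'.1 j = -c'.1 i := by omega
            have h2 := L2dir F hstar c' c hFs.symm hcj'
            -- c.1 j = -c.1 i = -(1+m), but c.1 j ≥ -m
            have h3 := neg_maxBelow_le c.2 i hi0 hj
            omega
          · exfalso
            have : c'.1 i = -c'.1 i := by omega
            have := L2dir F hstar c' c hFs.symm this
            omega
          · have hci' : c'.1 i = 1 + m := by
              rcases lt_or_ge m (c'.1 i) with h | h
              · omega
              · exfalso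
                obtain ⟨j, hj, hcj⟩ := initseg' c'.2 i hi0 hgt' (by rw [hmeq]; omega)
                exact hprev' j hj hcj
            omega
end Inj

namespace TaggedPartition
variable {n : ℕ}

noncomputable def cls (P : TaggedPartition n) (i : ℕ) : Set (Fin n) :=
  if h : i < n then (P.cover ⟨i, h⟩).choose else ∅

lemma cls_mem (P : TaggedPartition n) {i : ℕ} (h : i < n) : P.cls i ∈ P.classes := by
  rw [cls, dif_pos h]; exact (P.cover ⟨i, h⟩).choose_spec.1

lemma mem_cls (P : TaggedPartition n) {i : ℕ} (h : i < n) : ⟨i, h⟩ ∈ P.cls i := by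
  rw [cls, dif_pos h]; exact (P.cover ⟨i, h⟩).choose_spec.2

lemma eq_cls (P : TaggedPartition n) {A : Set (Fin n)} (hA : A ∈ P.classes) {i : ℕ}
    (h : i < n) (hi : (⟨i, h⟩ : Fin n) ∈ A) : A = P.cls i :=
  P.disjoint A hA _ (P.cls_mem h) ⟨⟨i, h⟩, hi, P.mem_cls h⟩

lemma cls_eq_iff (P : TaggedPartition n) {i j : ℕ} (hi : i < n) (hj : j < n) :
    P.cls i = P.cls j ↔ (⟨i, hi⟩ : Fin n) ∈ P.cls j := by
  constructor
  · intro h; rw [← h]; exact P.mem_cls hi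
  · intro h; exact (P.eq_cls (P.cls_mem hj) hi h).symm

def SameCls (P : TaggedPartition n) (j i : ℕ) : Prop :=
  j < n ∧ i < n ∧ P.cls j = P.cls i

def StarBack (P : TaggedPartition n) (i j : ℕ) : Prop :=
  j < n ∧ i < n ∧ P.star (P.cls i) = some (P.cls j)

def SelfStar (P : TaggedPartition n) (i : ℕ) : Prop :=
  i < n ∧ P.star (P.cls i) = some (P.cls i)

open Classical in
noncomputable abbrev findSC (P : TaggedPartition n) (i : ℕ) (h : ∃ j, j < i ∧ P.SameCls j i) : ℕ :=
  Nat.find h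

open Classical in
noncomputable abbrev findSB (P : TaggedPartition n) (i : ℕ) (h : ∃ j, j < i ∧ P.StarBack i j) : ℕ :=
  Nat.find h

open Classical in
noncomputable def bc (P : TaggedPartition n) (i : ℕ) : ℤ × ℤ :=
  if h0 : i = 0 then
    ((if P.SelfStar 0 then 0 else 1), max 0 (if P.SelfStar 0 then 0 else 1))
  else
    let M : ℤ := (P.bc (i-1)).2
    let v : ℤ :=
      if h1 : ∃ j, j < i ∧ P.SameCls j i then (P.bc (P.findSC i h1)).1
      else if h2 : ∃ j, j < i ∧ P.StarBack i j then -(P.bc (P.findSB i h2)).1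
      else if P.SelfStar i then 0
      else 1 + M
    (v, max M v)
termination_by i
decreasing_by
  · omega
  · exact (Nat.find_spec h1).1
  · exact (Nat.find_spec h2).1

open Classical in
lemma bc_eq (P : TaggedPartition n) {i : ℕ} (h0 : i ≠ 0) :
    P.bc i =
      (if h1 : ∃ j, j < i ∧ P.SameCls j i then (P.bc (Nat.find h1)).1
       else if h2 : ∃ j, j < i ∧ P.StarBack i j then -(P.bc (Nat.find h2)).1
       else if P.SelfStar i then 0
       else 1 + (P.bc (i-1)).2,
       max (P.bc (i-1)).2
        (if h1 : ∃ j, j < i ∧ P.SameCls j i then (P.bc (Nat.find h1)).1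
         else if h2 : ∃ j, j < i ∧ P.StarBack i j then -(P.bc (Nat.find h2)).1
         else if P.SelfStar i then 0
         else 1 + (P.bc (i-1)).2)) := by
  conv_lhs => rw [bc]
  rw [dif_neg h0]

open Classical in
lemma bc_zero (P : TaggedPartition n) :
    P.bc 0 = ((if P.SelfStar 0 then 0 else 1), max 0 (if P.SelfStar 0 then 0 else 1)) := by
  rw [bc]; rfl

open Classical in
lemma bc_snd (P : TaggedPartition n) {i : ℕ} (h0 : i ≠ 0) :
    (P.bc i).2 = max (P.bc (i-1)).2 (P.bc i).1 := by
  have h := P.bc_eq h0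
  conv_lhs => rw [h]
  conv_rhs => rw [h]

open Classical in
lemma bc_fst_case1 (P : TaggedPartition n) {i : ℕ}
    (h1 : ∃ j, j < i ∧ P.SameCls j i) :
    (P.bc i).1 = (P.bc (Nat.find h1)).1 := by
  have h0 : i ≠ 0 := by
    obtain ⟨j, hj, -⟩ := h1; omega
  conv_lhs => rw [bc]
  simp only [dif_neg h0, dif_pos h1]

open Classical in
lemma bc_fst_case2 (P : TaggedPartition n) {i : ℕ}
    (h1 : ¬ ∃ j, j < i ∧ P.SameCls j i) (h2 : ∃ j, j < i ∧ P.StarBack i j) :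
    (P.bc i).1 = -(P.bc (Nat.find h2)).1 := by
  have h0 : i ≠ 0 := by
    obtain ⟨j, hj, -⟩ := h2; omega
  conv_lhs => rw [bc]
  simp only [dif_neg h0, dif_neg h1, dif_pos h2]

open Classical in
lemma bc_fst_case3 (P : TaggedPartition n) {i : ℕ} (h0 : i ≠ 0)
    (h1 : ¬ ∃ j, j < i ∧ P.SameCls j i) (h2 : ¬ ∃ j, j < i ∧ P.StarBack i j)
    (h3 : P.SelfStar i) :
    (P.bc i).1 = 0 := by
  conv_lhs => rw [bc]
  simp only [dif_neg h0, dif_neg h1, dif_neg h2, if_pos h3]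

open Classical in
lemma bc_fst_case4 (P : TaggedPartition n) {i : ℕ} (h0 : i ≠ 0)
    (h1 : ¬ ∃ j, j < i ∧ P.SameCls j i) (h2 : ¬ ∃ j, j < i ∧ P.StarBack i j)
    (h3 : ¬ P.SelfStar i) :
    (P.bc i).1 = 1 + (P.bc (i-1)).2 := by
  conv_lhs => rw [bc]
  simp only [dif_neg h0, dif_neg h1, dif_neg h2, if_neg h3]

def Inv (P : TaggedPartition n) (i : ℕ) : Prop :=
  (∀ j, j ≤ i → -(P.bc i).2 ≤ (P.bc j).1 ∧ (P.bc j).1 ≤ (P.bc i).2) ∧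
  (∃ j, j ≤ i ∧ (P.bc j).1 = (P.bc i).2) ∧
  0 ≤ (P.bc i).2 ∧
  (∀ j, j ≤ i → ((P.bc j).1 = (P.bc i).1 ↔ P.cls j = P.cls i)) ∧
  (∀ j, j ≤ i → ((P.bc j).1 = -(P.bc i).1 ↔ P.star (P.cls i) = some (P.cls j))) ∧
  (0 < i → -(P.bc (i-1)).2 ≤ (P.bc i).1 ∧ (P.bc i).1 ≤ 1 + (P.bc (i-1)).2)

open Classical in
lemma inv_all (P : TaggedPartition n) : ∀ N, ∀ i, i < N → i < n → P.Inv i := by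
  intro N
  induction N with
  | zero => intro i h; omega
  | succ N IH =>
    intro i hiN hin
    have IH' : ∀ j, j < i → P.Inv j := fun j hj => IH j (by omega) (by omega)
    have pairC : ∀ j k, j < i → k < i →
        ((P.bc j).1 = (P.bc k).1 ↔ P.cls j = P.cls k) := by
      intro j k hj hk
      rcases le_total j k with h | h
      · exact (IH' k hk).2.2.2.1 j h
      · have h4 := (IH' j hj).2.2.2.1 k h
        constructor
        · intro he; exact (h4.mp he.symm).symm
        · intro he; exact (h4.mpr he.symm).symm
    have pairD : ∀ j k, j < i → k < i →
        ((P.bc j).1 = -(P.bc k).1 ↔ P.star (P.cls k) = some (P.cls j)) := by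
      intro j k hj hk
      rcases le_total j k with h | h
      · exact (IH' k hk).2.2.2.2.1 j h
      · have h5 := (IH' j hj).2.2.2.2.1 k h
        constructor
        · intro he
          have he' : (P.bc k).1 = -(P.bc j).1 := by omega
          exact P.star_invol _ _ (h5.mp he')
        · intro he
          have := h5.mpr (P.star_invol _ _ he)
          omega
    rcases Nat.eq_zero_or_pos i with rfl | hpos
    · -- i = 0
      have hz := P.bc_zero
      have h1 : (P.bc 0).1 = if P.SelfStar 0 then 0 else 1 := by rw [hz]
      have h2 : (P.bc 0).2 = max 0 (if P.SelfStar 0 then 0 else 1) := by rw [hz]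
      refine ⟨?_, ⟨0, le_rfl, ?_⟩, ?_, ?_, ?_, fun h => absurd h (lt_irrefl 0)⟩
      · intro j hj
        interval_cases j
        rw [h1, h2]; split_ifs <;> simp
      · rw [h1, h2]; split_ifs <;> simp
      · rw [h2]; split_ifs <;> simp
      · intro j hj
        interval_cases j
        simp
      · intro j hj
        interval_cases j
        rw [h1]
        split_ifs with hs
        · exact iff_of_true (by norm_num) hs.2
        · refine iff_of_false (by norm_num) ?_
          intro hc
          exact hs ⟨hin, hc⟩
    · -- i > 0
      have h0 : i ≠ 0 := by omega
      have hsnd := P.bc_snd h0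
      obtain ⟨Aprev, Bprev, Mnn, Cprev, Dprev, -⟩ := IH' (i-1) (by omega)
      have hle' : ∀ j, j < i → j ≤ i - 1 := by omega
      by_cases h1 : ∃ j, j < i ∧ P.SameCls j i
      · -- branch 1 : repeated class
        have hspec := Nat.find_spec h1
        set j0 := Nat.find h1 with hj0
        have hv : (P.bc i).1 = (P.bc j0).1 := P.bc_fst_case1 h1
        have hclsj0 : P.cls j0 = P.cls i := hspec.2.2.2
        have hb0 := Aprev j0 (hle' _ hspec.1)
        refine ⟨?_, ?_, by omega, ?_, ?_, by omega⟩
        · intro j hj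
          rcases lt_or_eq_of_le hj with hj' | rfl
          · have := Aprev j (hle' _ hj'); omega
          · omega
        · obtain ⟨j, hj, he⟩ := Bprev
          exact ⟨j, by omega, by omega⟩
        · intro j hj
          rcases lt_or_eq_of_le hj with hj' | rfl
          · rw [hv, pairC j j0 hj' hspec.1, hclsj0]
          · simp
        · intro j hj
          rcases lt_or_eq_of_le hj with hj' | rfl
          · rw [hv, ← hclsj0]
            exact pairD j j0 hj' hspec.1
          · rw [hv, ← hclsj0]
            exact (IH' j0 hspec.1).2.2.2.2.1 j0 le_rfl
      · by_cases h2 : ∃ j, j < i ∧ P.StarBack i j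
        · -- branch 2 : star partner appeared before
          have hspec := Nat.find_spec h2
          set j0 := Nat.find h2 with hj0
          have hv : (P.bc i).1 = -(P.bc j0).1 := P.bc_fst_case2 h1 h2
          have hst : P.star (P.cls i) = some (P.cls j0) := hspec.2.2.2
          have hstinv : P.star (P.cls j0) = some (P.cls i) := P.star_invol _ _ hst
          have hb0 := Aprev j0 (hle' _ hspec.1)
          have hne : P.cls j0 ≠ P.cls i := by
            intro he
            exact h1 ⟨j0, hspec.1, hspec.2.1, hin, he⟩
          refine ⟨?_, ?_, by omega, ?_, ?_, by omega⟩
          · intro j hj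
            rcases lt_or_eq_of_le hj with hj' | rfl
            · have := Aprev j (hle' _ hj'); omega
            · omega
          · obtain ⟨j, hj, he⟩ := Bprev
            exact ⟨j, by omega, by omega⟩
          · intro j hj
            rcases lt_or_eq_of_le hj with hj' | rfl
            · rw [hv]
              rw [pairD j j0 hj' hspec.1]
              constructor
              · intro he
                exact Option.some_injective _ (he.symm.trans hstinv)
              · intro he
                rw [he]; exact hstinv
            · simp
          · intro j hj
            rcases lt_or_eq_of_le hj with hj' | rfl
            · have hlhs : ((P.bc j).1 = -(P.bc i).1) ↔ (P.bc j).1 = (P.bc j0).1 := by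
                rw [hv]; omega
              rw [hlhs, pairC j j0 hj' hspec.1]
              constructor
              · intro he; rw [he]; exact hst
              · intro he
                exact (Option.some_injective _ (hst.symm.trans he)).symm
            · refine iff_of_false ?_ ?_
              · intro he
                have hz : (P.bc j0).1 = -(P.bc j0).1 := by omega
                have hfix := ((IH' j0 hspec.1).2.2.2.2.1 j0 le_rfl).mp hz
                exact hne (Option.some_injective _ (hfix.symm.trans hstinv))
              · intro he
                exact hne (Option.some_injective _ (hst.symm.trans he))
        · by_cases h3 : P.SelfStar i
          · -- branch 3 : fixed class
            have hv : (P.bc i).1 = 0 := P.bc_fst_case3 h0 h1 h2 h3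
            have hnotzero : ∀ j, j < i → (P.bc j).1 ≠ 0 := by
              intro j hj he
              have hz : (P.bc j).1 = -(P.bc j).1 := by omega
              have hfix := ((IH' j hj).2.2.2.2.1 j le_rfl).mp hz
              have heq : P.cls j = P.cls i := P.fix_unique _ _ hfix h3.2
              exact h1 ⟨j, hj, by omega, hin, heq⟩
            refine ⟨?_, ?_, by omega, ?_, ?_, by omega⟩
            · intro j hj
              rcases lt_or_eq_of_le hj with hj' | rfl
              · have := Aprev j (hle' _ hj'); omega
              · omega
            · obtain ⟨j, hj, he⟩ := Bprev
              exact ⟨j, by omega, by omega⟩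
            · intro j hj
              rcases lt_or_eq_of_le hj with hj' | rfl
              · refine iff_of_false (by have := hnotzero j hj'; omega) ?_
                intro he
                exact h1 ⟨j, hj', by omega, hin, he⟩
              · simp
            · intro j hj
              rcases lt_or_eq_of_le hj with hj' | rfl
              · refine iff_of_false (by have := hnotzero j hj'; omega) ?_
                intro he
                exact h1 ⟨j, hj', by omega, hin,
                  (Option.some_injective _ (h3.2.symm.trans he)).symm⟩
              · rw [hv]
                exact iff_of_true (by ring) h3.2
          · -- branch 4 : brand new positive value
            have hv : (P.bc i).1 = 1 + (P.bc (i-1)).2 := P.bc_fst_case4 h0 h1 h2 h3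
            refine ⟨?_, ⟨i, le_rfl, by omega⟩, by omega, ?_, ?_, by omega⟩
            · intro j hj
              rcases lt_or_eq_of_le hj with hj' | rfl
              · have := Aprev j (hle' _ hj'); omega
              · omega
            · intro j hj
              rcases lt_or_eq_of_le hj with hj' | rfl
              · refine iff_of_false (by have := Aprev j (hle' _ hj'); omega) ?_
                intro he
                exact h1 ⟨j, hj', by omega, hin, he⟩
              · simp
            · intro j hj
              rcases lt_or_eq_of_le hj with hj' | rfl
              · refine iff_of_false (by have := Aprev j (hle' _ hj'); omega) ?_
                intro he
                exact h2 ⟨j, hj', by omega, hin, he⟩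
              · refine iff_of_false (by omega) ?_
                intro he
                exact h3 ⟨hin, he⟩

end TaggedPartition


section Glue
variable {n : ℕ}

namespace TaggedPartition

lemma inv (P : TaggedPartition n) {i : ℕ} (h : i < n) : P.Inv i :=
  P.inv_all (i+1) i (Nat.lt_succ_self i) h

/-- The coloring vector built from a tagged partition. -/
noncomputable def cvec (P : TaggedPartition n) : Fin n → ℤ := fun i => (P.bc i.val).1

lemma cpair (P : TaggedPartition n) (i j : Fin n) :
    P.cvec i = P.cvec j ↔ P.cls i.val = P.cls j.val := by
  rcases le_total i.val j.val with h | h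
  · exact (P.inv j.isLt).2.2.2.1 i.val h
  · have h4 := (P.inv i.isLt).2.2.2.1 j.val h
    constructor
    · intro he; exact (h4.mp he.symm).symm
    · intro he; exact (h4.mpr he.symm).symm

lemma dpair (P : TaggedPartition n) (i j : Fin n) :
    P.cvec j = -P.cvec i ↔ P.star (P.cls i.val) = some (P.cls j.val) := by
  rcases le_total j.val i.val with h | h
  · exact (P.inv i.isLt).2.2.2.2.1 j.val h
  · have h5 := (P.inv j.isLt).2.2.2.2.1 i.val h
    constructor
    · intro he
      have he' : P.cvec i = -P.cvec j := by
        show (P.bc i.val).1 = -(P.bc j.val).1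
        have : (P.bc j.val).1 = -(P.bc i.val).1 := he
        omega
      exact P.star_invol _ _ (h5.mp he')
    · intro he
      have := h5.mpr (P.star_invol _ _ he)
      show (P.bc j.val).1 = -(P.bc i.val).1
      have h6 : (P.bc i.val).1 = -(P.bc j.val).1 := this
      omega

lemma maxBelow_cvec (P : TaggedPartition n) (i : Fin n) (hi : 0 < i.val) :
    maxBelow P.cvec i hi = (P.bc (i.val - 1)).2 := by
  have hin : i.val - 1 < n := lt_trans (by omega) i.isLt
  apply maxBelow_eq_of hi
  · intro j hj
    have hj' : j.val ≤ i.val - 1 := by have := Fin.lt_def.mp hj; omega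
    exact ((P.inv hin).1 j.val hj').2
  · obtain ⟨j, hj, he⟩ := (P.inv hin).2.1
    refine ⟨⟨j, by omega⟩, ?_, he⟩
    rw [Fin.lt_def]
    simp only []
    omega

lemma isColoringVec_cvec (P : TaggedPartition n) : IsColoringVec P.cvec := by
  constructor
  · intro h0
    show (P.bc 0).1 = 0 ∨ (P.bc 0).1 = 1
    rw [P.bc_zero]
    split_ifs <;> simp
  · intro i hi
    rw [P.maxBelow_cvec i hi]
    exact (P.inv i.isLt).2.2.2.2.2 hi

lemma levelset_eq_cls (P : TaggedPartition n) (i : Fin n) :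
    {j : Fin n | P.cvec j = P.cvec i} = P.cls i.val := by
  ext j
  simp only [Set.mem_setOf_eq]
  rw [P.cpair j i, P.cls_eq_iff j.isLt i.isLt]

lemma ext' {P Q : TaggedPartition n} (h1 : P.classes = Q.classes)
    (h2 : P.star = Q.star) : P = Q := by
  cases P; cases Q
  cases h1; cases h2
  rfl

end TaggedPartition

variable (F : {c : Fin n → ℤ // IsColoringVec c} → TaggedPartition n)
    (hclasses : ∀ c, (F c).classes = {A | ∃ i : Fin n, A = {j : Fin n | c.1 j = c.1 i}})
    (hstar : ∀ c A B, (F c).star A = some B ↔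
      ∃ i : Fin n, A = {j : Fin n | c.1 j = c.1 i} ∧
        B = {j : Fin n | c.1 j = -c.1 i} ∧ B.Nonempty)

include hclasses hstar in
lemma F_surj : Function.Surjective F := by
  intro P
  refine ⟨⟨P.cvec, P.isColoringVec_cvec⟩, ?_⟩
  set cc : {c : Fin n → ℤ // IsColoringVec c} := ⟨P.cvec, P.isColoringVec_cvec⟩ with hcc
  apply TaggedPartition.ext'
  · -- classes
    rw [hclasses]
    ext A
    simp only [Set.mem_setOf_eq]
    constructor
    · rintro ⟨i, rfl⟩
      rw [show {j : Fin n | cc.1 j = cc.1 i} = P.cls i.val from P.levelset_eq_cls i]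
      exact P.cls_mem i.isLt
    · intro hA
      obtain ⟨x, hx⟩ := P.nonempty A hA
      refine ⟨x, ?_⟩
      rw [show {j : Fin n | cc.1 j = cc.1 x} = P.cls x.val from P.levelset_eq_cls x]
      exact P.eq_cls hA x.isLt hx
  · -- star
    funext A
    rcases hPA : P.star A with _ | B
    · rcases hFA : (F cc).star A with _ | B
      · rfl
      · exfalso
        rw [hstar] at hFA
        obtain ⟨i, hA, hB, ⟨k, hk⟩⟩ := hFA
        rw [hB] at hk
        have hk' : P.cvec k = -P.cvec i := hk
        have hd := (P.dpair i k).mp hk'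
        rw [← P.levelset_eq_cls i, ← hA] at hd
        rw [hPA] at hd
        cases hd
    · refine (hstar _ A B).mpr ?_
      have hmem := P.star_mem A B hPA
      obtain ⟨x, hx⟩ := P.nonempty A hmem.1
      obtain ⟨y, hy⟩ := P.nonempty B hmem.2
      have hA : A = P.cls x.val := P.eq_cls hmem.1 x.isLt hx
      have hB : B = P.cls y.val := P.eq_cls hmem.2 y.isLt hy
      have hst' : P.star (P.cls x.val) = some (P.cls y.val) := by
        rw [← hA, ← hB]; exact hPA
      have hcy : P.cvec y = -P.cvec x := (P.dpair x y).mpr hst'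
      refine ⟨x, ?_, ?_, ?_⟩
      · rw [hA, ← P.levelset_eq_cls x]
      · rw [hB, ← P.levelset_eq_cls y]
        ext j
        simp only [Set.mem_setOf_eq]
        rw [hcy]
      · exact ⟨y, hy⟩

end Glue

/-- The map `c ↦ 𝒫_c` is a bijection between coloring vectors in `ℤⁿ` and tagged
partitions of `{1,…,n}`: any map `F` sending a coloring vector `c` to the tagged
partition whose classes are `[i] = {j : c_j = cᵢ}` and whose partial involution sends
`[i]` to `[i]* = {j : c_j = -cᵢ}` (defined exactly when this set is nonempty)
is bijective. -/
theorem coloringVec_taggedPartition_bijective {n : ℕ}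
    (F : {c : Fin n → ℤ // IsColoringVec c} → TaggedPartition n)
    (hclasses : ∀ c, (F c).classes = {A | ∃ i : Fin n, A = {j : Fin n | c.1 j = c.1 i}})
    (hstar : ∀ c A B, (F c).star A = some B ↔
      ∃ i : Fin n, A = {j : Fin n | c.1 j = c.1 i} ∧
        B = {j : Fin n | c.1 j = -c.1 i} ∧ B.Nonempty) :
    Function.Bijective F :=
  ⟨F_inj F hclasses hstar, F_surj F hclasses hstar⟩
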